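/- Every n-vertex graph with layered treewidth at most k has treewidth at most 2√(kn) − 1. -/

import Mathlib

open SimpleGraph

open SimpleGraph

/-- Transfer a vertex invariant along reachability. -/
lemma reach_invariant {α : Type} {H : SimpleGraph α} {P : α → Prop}
    (hP : ∀ ⦃a b⦄, H.Adj a b → (P a ↔ P b)) {a b : α} (h : H.Reachable a b) : P a ↔ P b := by
  obtain ⟨w⟩ := h
  induction w with
  | nil => exact Iff.rfl
  | cons hadj _ ih => exact (hP hadj).trans ih

/-- The "star of copies of a tree `T`" graph on `Option (ι × κ)`: one copy of `T`
for each `c : κ`, all attached via the copies of `x0` to a hub vertex `none`. -/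
def starTree {ι κ : Type} (T : SimpleGraph ι) (x0 : ι) : SimpleGraph (Option (ι × κ)) where
  Adj a b := (∃ x y c, T.Adj x y ∧ a = some (x, c) ∧ b = some (y, c)) ∨
    (∃ c, a = some (x0, c) ∧ b = none) ∨ (∃ c, a = none ∧ b = some (x0, c))
  symm := by
    constructor
    rintro a b (⟨x, y, c, hxy, rfl, rfl⟩ | ⟨c, rfl, rfl⟩ | ⟨c, rfl, rfl⟩)
    · exact Or.inl ⟨y, x, c, hxy.symm, rfl, rfl⟩
    · exact Or.inr (Or.inr ⟨c, rfl, rfl⟩)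
    · exact Or.inr (Or.inl ⟨c, rfl, rfl⟩)
  loopless := by
    constructor
    rintro a (⟨x, y, c, hxy, rfl, h⟩ | ⟨c, rfl, h⟩ | ⟨c, h, rfl⟩)
    · simp only [Option.some.injEq, Prod.mk.injEq] at h
      exact hxy.ne h.1
    · simp at h
    · simp at h

lemma starTree_reach_copy {ι κ : Type} {T : SimpleGraph ι} (x0 : ι) {x y : ι}
    (h : T.Reachable x y) (c : κ) :
    (starTree (κ := κ) T x0).Reachable (some (x, c)) (some (y, c)) := by
  obtain ⟨w⟩ := h
  induction w with
  | nil => exact Reachable.refl _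
  | cons hadj _ ih =>
    exact (Adj.reachable (Or.inl ⟨_, _, c, hadj, rfl, rfl⟩)).trans ih

lemma starTree_connected {ι κ : Type} {T : SimpleGraph ι} (hT : T.Connected) (x0 : ι) :
    (starTree (κ := κ) T x0).Connected := by
  rw [connected_iff]
  have key : ∀ a, (starTree (κ := κ) T x0).Reachable a none := by
    rintro (_ | ⟨x, c⟩)
    · exact Reachable.refl _
    · exact (starTree_reach_copy x0 (hT.preconnected x x0) c).trans
        (Adj.reachable (Or.inr (Or.inl ⟨c, rfl, rfl⟩)))
  exact ⟨fun a b => (key a).trans (key b).symm, ⟨none⟩⟩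

lemma starTree_isTree {ι κ : Type} {T : SimpleGraph ι} (hT : T.IsTree) (x0 : ι) :
    (starTree (κ := κ) T x0).IsTree := by
  classical
  refine ⟨starTree_connected hT.1 x0, ?_⟩
  rw [isAcyclic_iff_forall_adj_isBridge]
  intro a b hab
  rw [isBridge_iff]
  refine ?_
  intro hreach
  rcases hab with ⟨x, y, c, hxy, rfl, rfl⟩ | ⟨c, rfl, rfl⟩ | ⟨c, rfl, rfl⟩
  · -- copy edge
    have hbr : ¬(T \ fromEdgeSet {s(x, y)}).Reachable x y :=
      ((isAcyclic_iff_forall_adj_isBridge.mp hT.2) hxy)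
    set R := (T \ fromEdgeSet {s(x, y)}).Reachable with hR
    set P : Option (ι × κ) → Prop :=
      fun a => Option.elim a (R x0 x) (fun zd => (zd.2 = c ∧ R zd.1 x) ∨ (zd.2 ≠ c ∧ R x0 x))
      with hP
    have hinv : ∀ ⦃a b⦄,
        ((starTree (κ := κ) T x0) \ fromEdgeSet {s(some (x, c), some (y, c))}).Adj a b →
        (P a ↔ P b) := by
      intro a b h
      rw [sdiff_adj] at h
      obtain ⟨hadj, hne⟩ := h
      have hne' : s(a, b) ≠ s(some (x, c), some (y, c)) := by
        intro hh
        exact hne (by rw [fromEdgeSet_adj]; exact ⟨by simp [hh], hadj.ne⟩)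
      rcases hadj with ⟨z, w, d, hzw, rfl, rfl⟩ | ⟨d, rfl, rfl⟩ | ⟨d, rfl, rfl⟩
      · by_cases hd : d = c
        · subst hd
          have hzwne : s(z, w) ≠ s(x, y) := by
            intro hcontra
            apply hne'
            rw [Sym2.eq_iff] at hcontra ⊢
            rcases hcontra with ⟨rfl, rfl⟩ | ⟨rfl, rfl⟩
            · exact Or.inl ⟨rfl, rfl⟩
            · exact Or.inr ⟨rfl, rfl⟩
          have hzwR : R z w := by
            refine Adj.reachable ?_
            rw [sdiff_adj, fromEdgeSet_adj]
            exact ⟨hzw, by simp [hzwne]⟩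
          have hiff : R z x ↔ R w x := ⟨fun h => hzwR.symm.trans h, fun h => hzwR.trans h⟩
          simp only [hP, Option.elim]
          tauto
        · simp only [hP, Option.elim]
          tauto
      · simp only [hP, Option.elim]
        tauto
      · simp only [hP, Option.elim]
        tauto
    have hfin := (reach_invariant hinv hreach)
    have hPx : P (some (x, c)) := Or.inl ⟨rfl, Reachable.refl _⟩
    rcases hfin.mp hPx with ⟨_, hyx⟩ | ⟨hcc, _⟩
    · exact hbr hyx.symm
    · exact hcc rfl
  · -- hub edge some-none
    set P : Option (ι × κ) → Prop := fun a => Option.elim a False (fun zd => zd.2 = c) with hP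
    have hinv : ∀ ⦃a b⦄,
        ((starTree (κ := κ) T x0) \ fromEdgeSet {s(some (x0, c), none)}).Adj a b →
        (P a ↔ P b) := by
      intro a b h
      rw [sdiff_adj] at h
      obtain ⟨hadj, hne⟩ := h
      have hne' : s(a, b) ≠ s(some (x0, c), (none : Option (ι × κ))) := by
        intro hh
        exact hne (by rw [fromEdgeSet_adj]; exact ⟨by simp [hh], hadj.ne⟩)
      rcases hadj with ⟨z, w, d, hzw, rfl, rfl⟩ | ⟨d, rfl, rfl⟩ | ⟨d, rfl, rfl⟩
      · simp [hP]
      · have hd : d ≠ c := by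
          intro hdc; subst hdc; exact hne' rfl
        simp [hP, hd]
      · have hd : d ≠ c := by
          intro hdc; subst hdc
          exact hne' (by rw [Sym2.eq_swap])
        simp [hP, hd]
    have hfin := reach_invariant hinv hreach
    exact hfin.mp rfl
  · -- hub edge none-some
    set P : Option (ι × κ) → Prop := fun a => Option.elim a False (fun zd => zd.2 = c) with hP
    have hinv : ∀ ⦃a b⦄,
        ((starTree (κ := κ) T x0) \ fromEdgeSet {s(none, some (x0, c))}).Adj a b →
        (P a ↔ P b) := by
      intro a b h
      rw [sdiff_adj] at h
      obtain ⟨hadj, hne⟩ := h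
      have hne' : s(a, b) ≠ s((none : Option (ι × κ)), some (x0, c)) := by
        intro hh
        exact hne (by rw [fromEdgeSet_adj]; exact ⟨by simp [hh], hadj.ne⟩)
      rcases hadj with ⟨z, w, d, hzw, rfl, rfl⟩ | ⟨d, rfl, rfl⟩ | ⟨d, rfl, rfl⟩
      · simp [hP]
      · have hd : d ≠ c := by
          intro hdc; subst hdc
          exact hne' (by rw [Sym2.eq_swap])
        simp [hP, hd]
      · have hd : d ≠ c := by
          intro hdc; subst hdc; exact hne' rfl
        simp [hP, hd]
    have hfin := reach_invariant hinv hreach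
    exact hfin.mpr rfl

lemma starTree_induce_connected {ι κ : Type} {T : SimpleGraph ι} (x0 : ι) (c : κ) {s : Set ι}
    (hs : (T.induce s).Connected) :
    ((starTree (κ := κ) T x0).induce {a | ∃ x ∈ s, a = some (x, c)}).Connected := by
  refine Connected.map
    (⟨fun z => ⟨some (z.1, c), ⟨z.1, z.2, rfl⟩⟩, fun {u v} h => ?_⟩ :
      T.induce s →g (starTree (κ := κ) T x0).induce {a | ∃ x ∈ s, a = some (x, c)}) ?_ hs
  · simp only [comap_adj, Function.Embedding.coe_subtype] at h ⊢
    exact Or.inl ⟨u.1, v.1, c, h, rfl, rfl⟩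
  · rintro ⟨a, x, hx, rfl⟩
    exact ⟨⟨x, hx⟩, rfl⟩

lemma final_numeric (Sc ℓ k n tw : ℕ) (hℓ1 : 1 ≤ ℓ) (hk1 : 1 ≤ k)
    (h1le : 1 ≤ Sc + (ℓ - 1) * k) (hpigeon : ℓ * Sc ≤ n) (hub : n ≤ ℓ ^ 2 * k)
    (hlb : (ℓ - 1) ^ 2 * k ≤ n) (htw : tw ≤ Sc + (ℓ - 1) * k - 1) :
    (tw : ℝ) ≤ 2 * Real.sqrt (k * n) - 1 := by
  have hcast : (tw : ℝ) ≤ (Sc : ℝ) + ((ℓ : ℝ) - 1) * k - 1 := by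
    calc (tw : ℝ) ≤ ((Sc + (ℓ - 1) * k - 1 : ℕ) : ℝ) := by exact_mod_cast htw
      _ = (Sc : ℝ) + ((ℓ : ℝ) - 1) * k - 1 := by
          rw [Nat.cast_sub h1le, Nat.cast_add, Nat.cast_mul, Nat.cast_sub hℓ1]
          push_cast
          ring
  refine hcast.trans ?_
  have hp : (ℓ : ℝ) * Sc ≤ n := by exact_mod_cast hpigeon
  have huR : (n : ℝ) ≤ (ℓ : ℝ) ^ 2 * k := by exact_mod_cast hub
  have hl1R : (1 : ℝ) ≤ ℓ := by exact_mod_cast hℓ1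
  have hkR : (1 : ℝ) ≤ k := by exact_mod_cast hk1
  have hSsqrt : (Sc : ℝ) ≤ Real.sqrt (k * n) := by
    apply Real.le_sqrt_of_sq_le
    have hll : (1 : ℝ) ≤ (ℓ : ℝ) ^ 2 := one_le_pow₀ hl1R
    have h1 : ((ℓ : ℝ) * Sc) * ((ℓ : ℝ) * Sc) ≤ (n : ℝ) * n :=
      mul_le_mul hp hp (by positivity) (by positivity)
    have h2 : (n : ℝ) * n ≤ ((ℓ : ℝ) ^ 2 * k) * n :=
      mul_le_mul_of_nonneg_right huR (by positivity)
    nlinarith [h1, h2, hll]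
  have hsqrt2 : ((ℓ : ℝ) - 1) * k ≤ Real.sqrt (k * n) := by
    apply Real.le_sqrt_of_sq_le
    have hlo : (((ℓ - 1 : ℕ) : ℝ)) ^ 2 * k ≤ n := by exact_mod_cast hlb
    rw [Nat.cast_sub hℓ1] at hlo
    push_cast at hlo
    have hkk : (0 : ℝ) ≤ (k : ℝ) := Nat.cast_nonneg _
    nlinarith [mul_le_mul_of_nonneg_right hlo hkk]
  linarith [hSsqrt, hsqrt2]

lemma div_step' {ℓ r m : ℕ} (hr : r < ℓ) (hm : ¬ m % ℓ = r) :
    (m + 1 + (ℓ - 1 - r)) / ℓ = (m + (ℓ - 1 - r)) / ℓ := by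
  have h1 : m + 1 + (ℓ - 1 - r) = m + (ℓ - 1 - r) + 1 := by omega
  rw [h1, Nat.succ_div]
  have hdvd : ¬ ℓ ∣ (m + (ℓ - 1 - r) + 1) := by
    rintro ⟨q, hq⟩
    rcases q with _ | q'
    · rw [Nat.mul_zero] at hq; omega
    · apply hm
      have hmq : m = ℓ * q' + r := by
        rw [Nat.mul_succ] at hq
        omega
      rw [hmq, Nat.mul_add_mod, Nat.mod_eq_of_lt hr]
  simp [hdvd]

def IsTreeDecomp {V ι : Type} (G : SimpleGraph V) (T : SimpleGraph ι) (B : ι → Finset V) : Prop :=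
  T.IsTree ∧
  (∀ ⦃v w⦄, G.Adj v w → ∃ x, v ∈ B x ∧ w ∈ B x) ∧
  (∀ v : V, (T.induce {x | v ∈ B x}).Connected)

noncomputable def treewidth {V : Type} (G : SimpleGraph V) : ℕ :=
  sInf {k | ∃ (ι : Type) (T : SimpleGraph ι) (B : ι → Finset V),
    IsTreeDecomp G T B ∧ ∀ x, (B x).card ≤ k + 1}

def IsLayering {V : Type} (G : SimpleGraph V) (L : V → ℕ) : Prop :=
  ∀ ⦃v w⦄, G.Adj v w → L v ≤ L w + 1 ∧ L w ≤ L v + 1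

noncomputable def layeredTreewidth {V : Type} (G : SimpleGraph V) : ℕ :=
  sInf {k | ∃ (ι : Type) (T : SimpleGraph ι) (B : ι → Finset V) (L : V → ℕ),
    IsTreeDecomp G T B ∧ IsLayering G L ∧
    ∀ x i, ((B x).filter (fun v => L v = i)).card ≤ k}

theorem treewidth_le_of_layeredTreewidth {V : Type} [Fintype V] [Nonempty V]
    (G : SimpleGraph V) (k : ℕ) (h : layeredTreewidth G ≤ k) :
    (treewidth G : ℝ) ≤ 2 * Real.sqrt (k * Fintype.card V) - 1 := by
  classical
  set n := Fintype.card V with hn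
  have hn1 : 1 ≤ n := Fintype.card_pos
  obtain ⟨v₀⟩ := ‹Nonempty V›
  -- Step 1: extract a tree decomposition of layered width ≤ k
  have hmem : layeredTreewidth G ∈ {k | ∃ (ι : Type) (T : SimpleGraph ι) (B : ι → Finset V)
      (L : V → ℕ), IsTreeDecomp G T B ∧ IsLayering G L ∧
      ∀ x i, ((B x).filter (fun v => L v = i)).card ≤ k} := by
    unfold layeredTreewidth
    apply Nat.sInf_mem
    refine ⟨n, PUnit, ⊥, fun _ => Finset.univ, fun _ => 0, ⟨⟨?_, isAcyclic_bot⟩, ?_, ?_⟩, ?_, ?_⟩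
    · rw [connected_iff]
      exact ⟨fun a b => by rw [Subsingleton.elim a b], ⟨PUnit.unit⟩⟩
    · exact fun v w _ => ⟨PUnit.unit, Finset.mem_univ v, Finset.mem_univ w⟩
    · intro v
      rw [connected_iff]
      refine ⟨fun a b => ?_, ⟨⟨PUnit.unit, Finset.mem_univ v⟩⟩⟩
      rw [Subtype.ext (Subsingleton.elim a.1 b.1)]
    · exact fun v w _ => ⟨Nat.zero_le _, Nat.zero_le _⟩
    · exact fun _ i => le_trans (Finset.card_filter_le _ _) (le_of_eq Finset.card_univ)
  obtain ⟨ι, T, B, L, hdec, hlay, hwid0⟩ := hmem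
  have hwid : ∀ x i, ((B x).filter (fun v => L v = i)).card ≤ k := fun x i => (hwid0 x i).trans h
  have hk1 : 1 ≤ k := by
    obtain ⟨⟨x, hx⟩⟩ := (hdec.2.2 v₀).nonempty
    have hpos : 0 < ((B x).filter (fun v => L v = L v₀)).card :=
      Finset.card_pos.mpr ⟨v₀, Finset.mem_filter.mpr ⟨hx, rfl⟩⟩
    exact hpos.trans_le (hwid x (L v₀))
  -- Step 2: choose ℓ with (ℓ-1)² k ≤ n ≤ ℓ² k
  have hex : ∃ m, n ≤ (m + 1) ^ 2 * k := ⟨n, by nlinarith⟩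
  set ℓ := Nat.find hex + 1 with hℓdef
  have hub : n ≤ ℓ ^ 2 * k := Nat.find_spec hex
  have hℓ1 : 1 ≤ ℓ := by omega
  have hlb : (ℓ - 1) ^ 2 * k ≤ n := by
    rcases Nat.eq_zero_or_pos (Nat.find hex) with h0 | hpos
    · have h00 : ℓ - 1 = 0 := by omega
      rw [h00]
      simpa using Nat.zero_le n
    · have hmin := Nat.find_min hex (m := Nat.find hex - 1) (by omega)
      have heq : Nat.find hex - 1 + 1 = Nat.find hex := by omega
      rw [heq] at hmin
      have hl1 : ℓ - 1 = Nat.find hex := by omega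
      rw [hl1]; omega
  -- Step 3: choose the residue r by pigeonhole
  obtain ⟨r, hrmem, hrmin⟩ := Finset.exists_min_image (Finset.range ℓ)
    (fun r => (Finset.univ.filter (fun v => L v % ℓ = r)).card) ⟨0, Finset.mem_range.mpr hℓ1⟩
  have hr : r < ℓ := Finset.mem_range.mp hrmem
  set S : Finset V := Finset.univ.filter (fun v => L v % ℓ = r) with hS
  have hSmem : ∀ u, u ∈ S ↔ L u % ℓ = r := fun u => by simp [hS]
  have hpigeon : ℓ * S.card ≤ n := by
    have hfib : (Finset.univ : Finset V).card =
        ∑ b ∈ Finset.range ℓ, (Finset.univ.filter (fun v => L v % ℓ = b)).card :=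
      Finset.card_eq_sum_card_fiberwise (fun v _ => Finset.mem_range.mpr (Nat.mod_lt _ (by omega)))
    calc ℓ * S.card = ∑ _b ∈ Finset.range ℓ, S.card := by
          rw [Finset.sum_const, Finset.card_range, smul_eq_mul, Nat.mul_comm]
      _ ≤ ∑ b ∈ Finset.range ℓ, (Finset.univ.filter (fun v => L v % ℓ = b)).card :=
          Finset.sum_le_sum (fun b hb => hrmin b hb)
      _ = n := by rw [← hfib, Finset.card_univ]
  -- Step 4: the component structure
  set Ws : Set V := {v | ¬ (L v % ℓ = r)} with hWs
  set G' := G.induce Ws with hG'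
  set t := ℓ - 1 - r with ht
  have hstep : ∀ ⦃a b : Ws⦄, G'.Adj a b → (L a.1 + t) / ℓ = (L b.1 + t) / ℓ := by
    intro a b hab
    have hGadj : G.Adj a.1 b.1 := by simpa [hG'] using hab
    have h1 := hlay hGadj
    have ha : ¬ (L a.1 % ℓ = r) := a.2
    have hb : ¬ (L b.1 % ℓ = r) := b.2
    rcases Nat.lt_trichotomy (L a.1) (L b.1) with hlt | heq | hgt
    · have hb1 : L b.1 = L a.1 + 1 := by omega
      rw [hb1]; exact (div_step' hr ha).symm
    · rw [heq]
    · have ha1 : L a.1 = L b.1 + 1 := by omega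
      rw [ha1]; exact div_step' hr hb
  set x0 : ι := Classical.choice hdec.1.1.nonempty with hx0
  set Bags : Option (ι × G'.ConnectedComponent) → Finset V := fun a =>
    Option.elim a S (fun xc => S ∪ (B xc.1).filter
      (fun v => ∃ h : v ∈ Ws, G'.connectedComponentMk ⟨v, h⟩ = xc.2)) with hBags
  -- Edge coverage
  have hcover : ∀ ⦃v w⦄, G.Adj v w → ∃ a, v ∈ Bags a ∧ w ∈ Bags a := by
    intro v w hvw
    obtain ⟨x, hvx, hwx⟩ := hdec.2.1 hvw
    by_cases hv : v ∈ Ws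
    · by_cases hw : w ∈ Ws
      · have hadj' : G'.Adj ⟨v, hv⟩ ⟨w, hw⟩ := by simpa [hG'] using hvw
        refine ⟨some (x, G'.connectedComponentMk ⟨v, hv⟩),
          Finset.mem_union_right _ (Finset.mem_filter.mpr ⟨hvx, hv, rfl⟩),
          Finset.mem_union_right _ (Finset.mem_filter.mpr ⟨hwx, hw,
            (ConnectedComponent.connectedComponentMk_eq_of_adj hadj').symm⟩)⟩
      · exact ⟨some (x, G'.connectedComponentMk ⟨v, hv⟩),
          Finset.mem_union_right _ (Finset.mem_filter.mpr ⟨hvx, hv, rfl⟩),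
          Finset.mem_union_left _ ((hSmem w).mpr (not_not.mp hw))⟩
    · by_cases hw : w ∈ Ws
      · exact ⟨some (x, G'.connectedComponentMk ⟨w, hw⟩),
          Finset.mem_union_left _ ((hSmem v).mpr (not_not.mp hv)),
          Finset.mem_union_right _ (Finset.mem_filter.mpr ⟨hwx, hw, rfl⟩)⟩
      · exact ⟨none, (hSmem v).mpr (not_not.mp hv), (hSmem w).mpr (not_not.mp hw)⟩
  -- Connectivity of supports
  have hconn : ∀ v, ((starTree (κ := G'.ConnectedComponent) T x0).induce
      {a | v ∈ Bags a}).Connected := by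
    intro v
    by_cases hv : v ∈ Ws
    · have hset : {a | v ∈ Bags a} =
          {a | ∃ x ∈ {x | v ∈ B x}, a = some (x, G'.connectedComponentMk ⟨v, hv⟩)} := by
        ext a
        cases a with
        | none =>
          simp only [hBags, Option.elim, Set.mem_setOf_eq]
          constructor
          · intro hvS; exact absurd ((hSmem v).mp hvS) hv
          · rintro ⟨x, -, hcontra⟩; cases hcontra
        | some xc =>
          obtain ⟨x, c⟩ := xc
          simp only [hBags, Option.elim, Finset.mem_union, Finset.mem_filter, Set.mem_setOf_eq]
          constructor
          · rintro (hvS | ⟨hvB, hv', hc⟩)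
            · exact absurd ((hSmem v).mp hvS) hv
            · exact ⟨x, hvB, by rw [← hc]⟩
          · rintro ⟨x', hx', heq⟩
            injection heq with heq'
            obtain ⟨rfl, rfl⟩ := Prod.mk.injEq .. ▸ (Prod.mk.inj heq')
            exact Or.inr ⟨hx', hv, rfl⟩
      rw [hset]
      exact starTree_induce_connected x0 _ (hdec.2.2 v)
    · have hset : {a | v ∈ Bags a} = Set.univ := by
        apply Set.eq_univ_of_forall
        intro a
        have hvS : v ∈ S := (hSmem v).mpr (not_not.mp hv)
        cases a with
        | none => exact hvS
        | some xc => exact Finset.mem_union_left _ hvS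
      rw [hset]
      have hiso := (induceUnivIso (starTree (κ := G'.ConnectedComponent) T x0)).symm
      exact Connected.map hiso.toHom hiso.toEquiv.surjective (starTree_isTree hdec.1 x0).1
  -- Bag size bound
  have hbag : ∀ a, (Bags a).card ≤ S.card + (ℓ - 1) * k := by
    intro a
    cases a with
    | none => exact Nat.le_add_right S.card _
    | some xc =>
      obtain ⟨x, c⟩ := xc
      refine (Finset.card_union_le _ _).trans (Nat.add_le_add_left ?_ _)
      set F := (B x).filter
        (fun v => ∃ h : v ∈ Ws, G'.connectedComponentMk ⟨v, h⟩ = c) with hF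
      rcases F.eq_empty_or_nonempty with hFe | ⟨v1, hv1⟩
      · simp [hFe]
      · obtain ⟨hv1B, h1, hc1⟩ := Finset.mem_filter.mp hv1
        set M := (L v1 + t) / ℓ with hM
        have hmemI : ∀ u ∈ F, L u ∈ Finset.Ico (M * ℓ + r + 1 - ℓ) (M * ℓ + r) := by
          intro u hu
          obtain ⟨huB, hu', hcu⟩ := Finset.mem_filter.mp hu
          have hreach : G'.Reachable ⟨u, hu'⟩ ⟨v1, h1⟩ :=
            ConnectedComponent.exact (by rw [hcu, ← hc1])
          have hMu : (L u + t) / ℓ = M :=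
            (reach_invariant (P := fun a : Ws => (L a.1 + t) / ℓ = M)
              (fun a b hab => by
              show (L a.1 + t) / ℓ = M ↔ (L b.1 + t) / ℓ = M
              rw [hstep hab]) hreach).mpr rfl
          have hd1 : M * ℓ ≤ L u + t := by
            rw [← hMu]; exact Nat.div_mul_le_self _ _
          have hd2 : L u + t < M * ℓ + ℓ := by
            have h3 := Nat.div_add_mod (L u + t) ℓ
            rw [hMu, Nat.mul_comm] at h3
            have h4 : (L u + t) % ℓ < ℓ := Nat.mod_lt _ (by omega)
            omega
          have hne_top : L u ≠ M * ℓ + r := by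
            intro hEq
            exact hu' (by rw [hEq, Nat.mul_comm M ℓ, Nat.mul_add_mod, Nat.mod_eq_of_lt hr])
          rw [Finset.mem_Ico]
          omega
        have hsub : F ⊆ (Finset.Ico (M * ℓ + r + 1 - ℓ) (M * ℓ + r)).biUnion
            (fun i => (B x).filter (fun v => L v = i)) := by
          intro u hu
          rw [Finset.mem_biUnion]
          exact ⟨L u, hmemI u hu, Finset.mem_filter.mpr ⟨(Finset.mem_filter.mp hu).1, rfl⟩⟩
        calc F.card ≤ _ := Finset.card_le_card hsub
          _ ≤ ∑ i ∈ Finset.Ico (M * ℓ + r + 1 - ℓ) (M * ℓ + r),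
              ((B x).filter (fun v => L v = i)).card := Finset.card_biUnion_le
          _ ≤ (Finset.Ico (M * ℓ + r + 1 - ℓ) (M * ℓ + r)).card * k := by
              rw [← smul_eq_mul]
              exact Finset.sum_le_card_nsmul _ _ _ (fun i _ => hwid x i)
          _ ≤ (ℓ - 1) * k := by
              apply Nat.mul_le_mul_right
              rw [Nat.card_Ico]
              omega
  -- Step 5: conclude the treewidth bound
  have h1le : 1 ≤ S.card + (ℓ - 1) * k := by
    rcases eq_or_lt_of_le hℓ1 with h1 | h2
    · have hr0 : r = 0 := by omega
      have hmod : L v₀ % ℓ = r := by rw [← h1, hr0]; exact Nat.mod_one _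
      have := Finset.card_pos.mpr ⟨v₀, (hSmem v₀).mpr hmod⟩
      omega
    · have := Nat.mul_pos (show 0 < ℓ - 1 by omega) (show 0 < k by omega)
      omega
  have hmemTW : treewidth G ≤ S.card + (ℓ - 1) * k - 1 := by
    unfold treewidth
    apply Nat.sInf_le
    refine ⟨Option (ι × G'.ConnectedComponent), starTree (κ := G'.ConnectedComponent) T x0,
      Bags, ⟨starTree_isTree hdec.1 x0, hcover, hconn⟩, ?_⟩
    intro a
    have := hbag a
    omega
  exact final_numeric S.card ℓ k n (treewidth G) hℓ1 hk1 h1le hpigeon hub hlb hmemTW
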